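/- In any finitely branching pLTS, the intersection of the bisimulation approximants equals bisimilarity: ⋂_{n∈ℕ} ∼ₙ = ∼. -/

import Mathlib

open scoped ENNReal

noncomputable section

/-- A probabilistic labelled transition system (pLTS): states `S`, alphabet `A`,
and a transition relation into probability distributions (`PMF`s) on `S`. -/
structure PLTS (S : Type) (A : Type) where
  Tr : S → A → PMF S → Prop

namespace PLTS

variable {S A : Type}

/-- The mass that a distribution assigns to a set of states. -/
def mass (d : PMF S) (E : Set S) : ℝ≥0∞ := ∑' s : E, d s

/-- Two distributions are `r`-equivalent if they assign equal mass to every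
`r`-equivalence class (for an equivalence `r`, the classes are the sets `{t | r s t}`). -/
def REquiv (r : S → S → Prop) (d d' : PMF S) : Prop :=
  ∀ s : S, mass d {t | r s t} = mass d' {t | r s t}

/-- An equivalence relation is a bisimulation if related states can match
each other's transitions with `r`-equivalent target distributions. -/
def IsBisimulation (L : PLTS S A) (r : S → S → Prop) : Prop :=
  Equivalence r ∧
    ∀ s t, r s t → ∀ a d, L.Tr s a d → ∃ d', L.Tr t a d' ∧ REquiv r d d'

/-- Bisimilarity: the union of all bisimulation relations. -/
def Bisim (L : PLTS S A) (s t : S) : Prop :=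
  ∃ r, L.IsBisimulation r ∧ r s t

/-- The bisimulation approximants `∼ₙ`. -/
def approx (L : PLTS S A) : ℕ → S → S → Prop
  | 0 => fun _ _ => True
  | n + 1 => fun s t =>
      (∀ a d, L.Tr s a d → ∃ d', L.Tr t a d' ∧ REquiv (L.approx n) d d') ∧
      (∀ a d', L.Tr t a d' → ∃ d, L.Tr s a d ∧ REquiv (L.approx n) d d')

/-- A pLTS is finitely branching if every state has finitely many transitions. -/
def FinBranching (L : PLTS S A) : Prop :=
  ∀ s, {p : A × PMF S | L.Tr s p.1 p.2}.Finite

/-- One-step successor relation: `s → s'` iff some transition of `s` gives `s'`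
positive probability. -/
def Step (L : PLTS S A) (s s' : S) : Prop :=
  ∃ a d, L.Tr s a d ∧ d s' ≠ 0

end PLTS

namespace PLTSAux


open MeasureTheory

variable {S A : Type}

lemma mass_eq_toMeasure (d : PMF S) (E : Set S) :
    PLTS.mass d E = @PMF.toMeasure S ⊤ d E := by
  letI : MeasurableSpace S := ⊤
  rw [PMF.toMeasure_apply (s := E) d MeasurableSpace.measurableSet_top]
  exact tsum_subtype E d

lemma requiv_refl (r : S → S → Prop) (d : PMF S) : PLTS.REquiv r d d := fun _ => rfl

lemma requiv_symm {r : S → S → Prop} {d d' : PMF S} (h : PLTS.REquiv r d d') :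
    PLTS.REquiv r d' d := fun s => (h s).symm

lemma requiv_trans {r : S → S → Prop} {d d' d'' : PMF S}
    (h : PLTS.REquiv r d d') (h' : PLTS.REquiv r d' d'') : PLTS.REquiv r d d'' :=
  fun s => (h s).trans (h' s)

/-- Coarsening: if `r ⊆ r'` are both equivalences on a countable type, then
`r`-equivalence of distributions implies `r'`-equivalence. -/
lemma requiv_mono [Countable S] {r r' : S → S → Prop} (hr : Equivalence r)
    (hsub : ∀ a b, r a b → r' a b) (hr' : Equivalence r')
    {d d' : PMF S} (h : PLTS.REquiv r d d') : PLTS.REquiv r' d d' := by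
  letI : MeasurableSpace S := ⊤
  letI st : Setoid S := ⟨r, hr⟩
  intro s
  set E : Set S := {t | r' s t} with hE
  have hclosed : ∀ u v, u ∈ E → r u v → v ∈ E := by
    intro u v hu huv
    exact hr'.trans hu (hsub _ _ huv)
  set C : Quotient st → Set S := fun q => {u | Quotient.mk st u = q} with hC
  have hmem : ∀ u v : S, (u ∈ C (Quotient.mk st v)) ↔ r v u := by
    intro u v
    constructor
    · intro hu; exact hr.symm (Quotient.exact hu)
    · intro hu; exact Quotient.sound (hr.symm hu)
  have hUnion : E = ⋃ q : Quotient st, (C q ∩ E) := by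
    ext u
    constructor
    · intro hu
      exact Set.mem_iUnion.2 ⟨Quotient.mk st u, ⟨rfl, hu⟩⟩
    · intro hu
      obtain ⟨q, hq⟩ := Set.mem_iUnion.1 hu
      exact hq.2
  have hdisj : Pairwise (Function.onFun Disjoint fun q : Quotient st => C q ∩ E) := by
    intro q q' hne
    refine Set.disjoint_left.2 ?_
    rintro u ⟨hu1, _⟩ ⟨hu2, _⟩
    exact hne (hu1.symm.trans hu2)
  have key : ∀ (e : PMF S) , e.toMeasure E = ∑' q : Quotient st, e.toMeasure (C q ∩ E) := by
    intro e
    conv_lhs => rw [hUnion]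
    exact measure_iUnion hdisj (fun _ => MeasurableSpace.measurableSet_top)
  have hpiece : ∀ q : Quotient st, d.toMeasure (C q ∩ E) = d'.toMeasure (C q ∩ E) := by
    intro q
    induction q using Quotient.ind with
    | _ v =>
      by_cases hcase : ∃ u, u ∈ C (Quotient.mk st v) ∩ E
      · obtain ⟨u, hu1, hu2⟩ := hcase
        have hru : r v u := (hmem u v).1 hu1
        have heq : C (Quotient.mk st v) ∩ E = {w | r u w} := by
          ext w
          constructor
          · rintro ⟨hw1, _⟩
            exact hr.trans (hr.symm hru) ((hmem w v).1 hw1)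
          · intro hw
            refine ⟨(hmem w v).2 (hr.trans hru hw), hclosed u w hu2 hw⟩
        rw [heq, ← mass_eq_toMeasure, ← mass_eq_toMeasure]
        exact h u
      · have : C (Quotient.mk st v) ∩ E = ∅ := by
          ext u; simp only [Set.mem_empty_iff_false, iff_false]
          exact fun hu => hcase ⟨u, hu⟩
        rw [this]
        simp
  rw [mass_eq_toMeasure, mass_eq_toMeasure, key d, key d']
  exact tsum_congr hpiece

lemma approx_equiv (L : PLTS S A) : ∀ n, Equivalence (L.approx n)
  | 0 => ⟨fun _ => trivial, fun _ => trivial, fun _ _ => trivial⟩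
  | n + 1 => by
      constructor
      · intro s
        exact ⟨fun a d h => ⟨d, h, requiv_refl _ _⟩, fun a d h => ⟨d, h, requiv_refl _ _⟩⟩
      · rintro s t ⟨h1, h2⟩
        exact ⟨fun a d' h => let ⟨d, hd, he⟩ := h2 a d' h; ⟨d, hd, requiv_symm he⟩,
          fun a d h => let ⟨d', hd', he⟩ := h1 a d h; ⟨d', hd', requiv_symm he⟩⟩
      · rintro s t u ⟨h1, h2⟩ ⟨g1, g2⟩
        constructor
        · intro a d hd
          obtain ⟨d', hd', he⟩ := h1 a d hd
          obtain ⟨d'', hd'', he'⟩ := g1 a d' hd'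
          exact ⟨d'', hd'', requiv_trans he he'⟩
        · intro a d hd
          obtain ⟨d', hd', he⟩ := g2 a d hd
          obtain ⟨d'', hd'', he'⟩ := h2 a d' hd'
          exact ⟨d'', hd'', requiv_trans he' he⟩

lemma approx_mono [Countable S] (L : PLTS S A) :
    ∀ n, ∀ s t, L.approx (n + 1) s t → L.approx n s t
  | 0 => fun _ _ _ => trivial
  | n + 1 => by
      rintro s t ⟨h1, h2⟩
      constructor
      · intro a d hd
        obtain ⟨d', hd', he⟩ := h1 a d hd
        exact ⟨d', hd', requiv_mono (approx_equiv L (n + 1)) (approx_mono L n)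
          (approx_equiv L n) he⟩
      · intro a d hd
        obtain ⟨d', hd', he⟩ := h2 a d hd
        exact ⟨d', hd', requiv_mono (approx_equiv L (n + 1)) (approx_mono L n)
          (approx_equiv L n) he⟩

lemma approx_le [Countable S] (L : PLTS S A) {m n : ℕ} (hmn : m ≤ n) :
    ∀ s t, L.approx n s t → L.approx m s t := by
  induction hmn with
  | refl => exact fun _ _ h => h
  | step _ ih => exact fun s t h => ih s t (approx_mono L _ s t h)

end PLTSAux

/-- In any finitely branching pLTS, the intersection of the
bisimulation approximants equals bisimilarity: `⋂ₙ ∼ₙ = ∼`. -/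
theorem iInter_approx_eq_bisim (S A : Type) [Countable S]
    (L : PLTS S A) (hfb : L.FinBranching) :
    ∀ s t : S, (∀ n : ℕ, L.approx n s t) ↔ L.Bisim s t := by
  open PLTSAux MeasureTheory in
  letI : MeasurableSpace S := ⊤
  set r : S → S → Prop := fun s t => ∀ n, L.approx n s t with hr
  have hrEquiv : Equivalence r := by
    constructor
    · intro s n; exact (approx_equiv L n).refl s
    · intro s t h n; exact (approx_equiv L n).symm (h n)
    · intro s t u h g n; exact (approx_equiv L n).trans (h n) (g n)
  -- key matching lemma for the hard direction
  have hmatch : ∀ s t, r s t → ∀ a d, L.Tr s a d →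
      ∃ d', L.Tr t a d' ∧ PLTS.REquiv r d d' := by
    intro s t hst a d hd
    have hfinset : ({d' : PMF S | L.Tr t a d'}).Finite := by
      refine Set.Finite.subset ((hfb t).image Prod.snd) ?_
      intro d' hd'
      exact ⟨(a, d'), hd', rfl⟩
    haveI : Finite {d' : PMF S // L.Tr t a d'} := hfinset.to_subtype
    have H : ∀ n : ℕ, ∃ d' : {d' : PMF S // L.Tr t a d'},
        PLTS.REquiv (L.approx n) d d'.1 := by
      intro n
      obtain ⟨d', hd', he⟩ := (hst (n + 1)).1 a d hd
      exact ⟨⟨d', hd'⟩, he⟩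
    choose f hf using H
    obtain ⟨d₀, hd₀⟩ := Finite.exists_infinite_fiber f
    have hinf : (f ⁻¹' {d₀}).Infinite := Set.infinite_coe_iff.1 hd₀
    have hall : ∀ m : ℕ, PLTS.REquiv (L.approx m) d d₀.1 := by
      intro m
      obtain ⟨n, hn, hnm⟩ := hinf.exists_gt m
      have : f n = d₀ := hn
      have := hf n
      rw [‹f n = d₀›] at this
      exact requiv_mono (approx_equiv L n) (approx_le L (le_of_lt hnm))
        (approx_equiv L m) this
    refine ⟨d₀.1, d₀.2, ?_⟩
    -- mass on intersection classes via limits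
    intro u
    have hclass : {v | r u v} = ⋂ n, {v | L.approx n u v} := by
      ext v; simp [hr, Set.mem_iInter]
    have hmass : ∀ e : PMF S,
        e.toMeasure {v | r u v} = ⨅ n, e.toMeasure {v | L.approx n u v} := by
      intro e
      rw [hclass]
      refine Directed.measure_iInter (fun n => MeasurableSpace.measurableSet_top.nullMeasurableSet)
        ?_ ⟨0, measure_ne_top _ _⟩
      intro i j
      refine ⟨max i j, ?_, ?_⟩
      · intro v hv; exact approx_le L (le_max_left i j) u v hv
      · intro v hv; exact approx_le L (le_max_right i j) u v hv
    rw [mass_eq_toMeasure, mass_eq_toMeasure, hmass d, hmass d₀.1]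
    refine iInf_congr fun n => ?_
    have := hall n u
    rwa [mass_eq_toMeasure, mass_eq_toMeasure] at this
  intro s t
  constructor
  · intro h
    exact ⟨r, ⟨hrEquiv, hmatch⟩, h⟩
  · rintro ⟨r', ⟨hEq, hMatch⟩, hst⟩
    have key : ∀ n, ∀ s t, r' s t → L.approx n s t := by
      intro n
      induction n with
      | zero => exact fun _ _ _ => trivial
      | succ n ih =>
        intro s t hst'
        constructor
        · intro a d hd
          obtain ⟨d', hd', he⟩ := hMatch s t hst' a d hd
          exact ⟨d', hd', requiv_mono hEq ih (approx_equiv L n) he⟩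
        · intro a d' hd'
          obtain ⟨d, hd, he⟩ := hMatch t s (hEq.symm hst') a d' hd'
          exact ⟨d, hd, requiv_symm (requiv_mono hEq ih (approx_equiv L n) he)⟩
    exact fun n => key n s t hst
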